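/- Let G be an undirected graph on vertex set V and let C : V → V be a labeling such that C(u) = C(v) implies u and v are in the same connected component of G, and such that every vertex v satisfies either C(v) = v, or C(v) = r with C(r) = r (height-one trees). If C' is a correct connectivity labeling of the contracted graph G[C] (whose vertices are labels and whose edges are pairs (C(u), C(v)) for edges (u,v) of G with C(u) ≠ C(v)), then the composed labeling C''(v) = C'(C(v)) is a correct connectivity labeling of G: C''(u) = C''(v) if and only if u and v lie in the same connected component of G. -/

import Mathlib

/-- The contracted graph `G[C]`: vertices are labels, with an edge between
labels `a ≠ b` whenever some edge `(u,v)` of `G` has `C u = a` and `C v = b`. -/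
def contractedGraph {V : Type*} (G : SimpleGraph V) (C : V → V) : SimpleGraph V where
  Adj a b := a ≠ b ∧ ∃ u v, G.Adj u v ∧ C u = a ∧ C v = b
  symm := by
    constructor
    rintro a b ⟨hab, u, v, huv, hu, hv⟩
    exact ⟨hab.symm, v, u, huv.symm, hv, hu⟩
  loopless := by
    constructor
    rintro a ⟨hab, -⟩
    exact hab rfl

lemma reach_to_contracted {V : Type*} (G : SimpleGraph V) (C : V → V) {u v : V}
    (h : G.Reachable u v) : (contractedGraph G C).Reachable (C u) (C v) := by
  obtain ⟨w⟩ := h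
  induction w with
  | nil => exact SimpleGraph.Reachable.refl _
  | cons h p ih =>
    rename_i a b c
    by_cases hc : C a = C b
    · rw [hc]; exact ih
    · have hadj : (contractedGraph G C).Adj (C a) (C b) := ⟨hc, a, b, h, rfl, rfl⟩
      exact hadj.reachable.trans ih

lemma contracted_to_reach {V : Type*} (G : SimpleGraph V) (C : V → V)
    (hpartial : ∀ u v, C u = C v → G.Reachable u v)
    (hheight : ∀ v, C (C v) = C v) {a b : V}
    (h : (contractedGraph G C).Reachable a b) :
    ∀ u v, C u = a → C v = b → G.Reachable u v := by
  obtain ⟨w⟩ := h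
  induction w with
  | nil =>
    intro u v hu hv
    exact hpartial u v (hu.trans hv.symm)
  | cons hadj p ih =>
    rename_i a x c
    intro u v hu hv
    obtain ⟨-, s, t, hst, hs, ht⟩ := hadj
    have h1 : G.Reachable u s := hpartial u s (hu.trans hs.symm)
    have h2 : G.Reachable t v := ih t v ht hv
    exact h1.trans (hst.reachable.trans h2)

theorem composed_labeling_correct {V : Type*} (G : SimpleGraph V) (C C' : V → V)
    (hpartial : ∀ u v, C u = C v → G.Reachable u v)
    (hheight : ∀ v, C (C v) = C v)
    (hC' : ∀ a b, C' a = C' b ↔ (contractedGraph G C).Reachable a b) :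
    ∀ u v, C' (C u) = C' (C v) ↔ G.Reachable u v := by
  intro u v
  rw [hC']
  constructor
  · intro h
    exact contracted_to_reach G C hpartial hheight h u v rfl rfl
  · exact reach_to_contracted G C
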